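/- arXiv:1704.00916 — 3 statements merged into one kernel-verified Lean document; each statement's English description precedes it below -/
import Mathlib

section
/- Let f be twice continuously differentiable on ℝⁿ \ {0} with Δf = 0. Then the Kelvin transform Kf(x) = ‖x‖^{2-n} f(x/‖x‖²) satisfies Δ(Kf) = 0 on ℝⁿ \ {0}. -/
open scoped RealInnerProductSpace Topology
set_option maxHeartbeats 2000000
noncomputable section

theorem hasFDerivAt_normSq {n : ℕ} (y : EuclideanSpace ℝ (Fin n)) :
    HasFDerivAt (fun w : EuclideanSpace ℝ (Fin n) => ‖w‖^2) ((2:ℝ) • (innerSL ℝ y)) y := by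
  have h := (hasFDerivAt_id y).inner ℝ (hasFDerivAt_id y)
  simp only [id] at h
  have he : (fun t : EuclideanSpace ℝ (Fin n) => ⟪t, t⟫) = fun w => ‖w‖^2 := by
    funext t; exact real_inner_self_eq_norm_sq t
  rw [he] at h
  refine h.congr_fderiv ?_
  ext v
  simp only [ContinuousLinearMap.smul_apply, ContinuousLinearMap.comp_apply,
    ContinuousLinearMap.prod_apply, ContinuousLinearMap.id_apply, fderivInnerCLM_apply,
    innerSL_apply_apply, two_smul]
  rw [ContinuousLinearMap.add_apply, innerSL_apply_apply, real_inner_comm v y]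

theorem kelvin_aux (n : ℕ) (f : EuclideanSpace ℝ (Fin n) → ℝ)
    (hf : ContDiffOn ℝ 2 f {x | x ≠ 0})
    (hharm : ∀ z : EuclideanSpace ℝ (Fin n), z ≠ 0 →
      ∑ i : Fin n, fderiv ℝ (fun y => fderiv ℝ f y (EuclideanSpace.single i (1:ℝ))) z
        (EuclideanSpace.single i (1:ℝ)) = 0)
    (x : EuclideanSpace ℝ (Fin n)) (hx : x ≠ 0) :
    ∑ i : Fin n, fderiv ℝ (fun y => fderiv ℝ
        (fun w => (‖w‖^2) ^ ((2 - (n:ℝ))/2) * f ((‖w‖^2) ^ (-1:ℝ) • w)) y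
        (EuclideanSpace.single i (1:ℝ))) x (EuclideanSpace.single i (1:ℝ)) = 0 := by
  have hopen : IsOpen {w : EuclideanSpace ℝ (Fin n) | w ≠ 0} := isOpen_compl_singleton
  set E1 : ℝ := (2 - (n:ℝ))/2 with hE1
  set e : Fin n → EuclideanSpace ℝ (Fin n) := fun i => EuclideanSpace.single i (1:ℝ) with he
  set N : EuclideanSpace ℝ (Fin n) → ℝ := fun w => ‖w‖^2 with hN
  set σ : EuclideanSpace ℝ (Fin n) → EuclideanSpace ℝ (Fin n) :=
    fun w => (N w) ^ (-1:ℝ) • w with hσ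
  set g : EuclideanSpace ℝ (Fin n) → ℝ := fun w => (N w) ^ E1 * f (σ w) with hg
  set Φ : EuclideanSpace ℝ (Fin n) → (EuclideanSpace ℝ (Fin n) →L[ℝ] ℝ) :=
    fun y => fderiv ℝ f (σ y) with hΦ
  have hNpos : ∀ y : EuclideanSpace ℝ (Fin n), y ≠ 0 → 0 < N y := by
    intro y hy
    have : 0 < ‖y‖ := norm_pos_iff.mpr hy
    positivity
  have hσ0 : ∀ y : EuclideanSpace ℝ (Fin n), y ≠ 0 → σ y ≠ 0 := by
    intro y hy
    refine smul_ne_zero ?_ hy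
    exact (Real.rpow_pos_of_pos (hNpos y hy) _).ne'
  have hmem : ∀ y : EuclideanSpace ℝ (Fin n), y ≠ 0 →
      {w : EuclideanSpace ℝ (Fin n) | w ≠ 0} ∈ 𝓝 y := fun y hy => hopen.mem_nhds hy
  set Dσ : EuclideanSpace ℝ (Fin n) → (EuclideanSpace ℝ (Fin n) →L[ℝ] EuclideanSpace ℝ (Fin n)) :=
    fun y => (N y ^ (-1:ℝ)) • ContinuousLinearMap.id ℝ (EuclideanSpace ℝ (Fin n)) +
      (((-1:ℝ) * N y ^ ((-1:ℝ) - 1)) • ((2:ℝ) • innerSL ℝ y)).smulRight y with hDσ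
  have hσd : ∀ y : EuclideanSpace ℝ (Fin n), y ≠ 0 → HasFDerivAt σ (Dσ y) y := by
    intro y hy
    exact ((hasFDerivAt_normSq y).rpow_const (Or.inl (hNpos y hy).ne')).smul (hasFDerivAt_id y)
  have hips : ∀ (y : EuclideanSpace ℝ (Fin n)) (i : Fin n), ⟪y, e i⟫ = y i := by
    intro y i; simp [he, EuclideanSpace.inner_single_right]
  have hfd : ∀ y : EuclideanSpace ℝ (Fin n), y ≠ 0 → HasFDerivAt f (Φ y) (σ y) := by
    intro y hy
    exact ((hf.contDiffAt (hmem _ (hσ0 y hy))).differentiableAt two_ne_zero).hasFDerivAt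
  set Dg : EuclideanSpace ℝ (Fin n) → (EuclideanSpace ℝ (Fin n) →L[ℝ] ℝ) := fun y =>
    ((N y)^E1) • ((Φ y).comp (Dσ y)) +
      f (σ y) • ((E1 * (N y)^(E1-1)) • ((2:ℝ) • innerSL ℝ y)) with hDg
  have hgd : ∀ y : EuclideanSpace ℝ (Fin n), y ≠ 0 → HasFDerivAt g (Dg y) y := by
    intro y hy
    exact ((hasFDerivAt_normSq y).rpow_const (Or.inl (hNpos y hy).ne')).mul
      ((hfd y hy).comp y (hσd y hy))
  have hG : ∀ (i : Fin n) (y : EuclideanSpace ℝ (Fin n)), y ≠ 0 →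
      fderiv ℝ g y (e i) =
        (N y)^E1 * ((N y)^(-1:ℝ) * Φ y (e i)) +
        (N y)^E1 * ((-1:ℝ) * (N y)^((-1:ℝ)-1) * (2 * y i) * Φ y y) +
        f (σ y) * (E1 * (N y)^(E1-1) * (2 * y i)) := by
    intro i y hy
    rw [(hgd y hy).fderiv]
    simp only [hDg, hDσ, ContinuousLinearMap.add_apply, ContinuousLinearMap.smul_apply,
      ContinuousLinearMap.comp_apply, ContinuousLinearMap.smulRight_apply,
      ContinuousLinearMap.id_apply, innerSL_apply_apply, smul_eq_mul, map_add, map_smul,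
      hips]
    ring
  -- stage 2
  have hNx : 0 < N x := hNpos x hx
  set M : EuclideanSpace ℝ (Fin n) →L[ℝ]
      (EuclideanSpace ℝ (Fin n) →L[ℝ] ℝ) := fderiv ℝ (fderiv ℝ f) (σ x) with hM
  have hMd : HasFDerivAt (fderiv ℝ f) M (σ x) := by
    have h2 : ContDiffAt ℝ 2 f (σ x) := hf.contDiffAt (hmem _ (hσ0 x hx))
    have h1 : ContDiffAt ℝ 1 (fderiv ℝ f) (σ x) := h2.fderiv_right (by norm_num)
    exact (h1.differentiableAt one_ne_zero).hasFDerivAt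
  have hΦd : HasFDerivAt Φ (M.comp (Dσ x)) x := hMd.comp x (hσd x hx)
  have hu : HasFDerivAt (fun y : EuclideanSpace ℝ (Fin n) => N y ^ E1)
      ((E1 * N x ^ (E1 - 1)) • ((2:ℝ) • innerSL ℝ x)) x :=
    (hasFDerivAt_normSq x).rpow_const (Or.inl hNx.ne')
  have hv1 : HasFDerivAt (fun y : EuclideanSpace ℝ (Fin n) => N y ^ (-1:ℝ))
      (((-1:ℝ) * N x ^ ((-1:ℝ) - 1)) • ((2:ℝ) • innerSL ℝ x)) x :=
    (hasFDerivAt_normSq x).rpow_const (Or.inl hNx.ne')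
  have hv2 : HasFDerivAt (fun y : EuclideanSpace ℝ (Fin n) => N y ^ ((-1:ℝ)-1))
      ((((-1:ℝ)-1) * N x ^ ((-1:ℝ) - 1 - 1)) • ((2:ℝ) • innerSL ℝ x)) x :=
    (hasFDerivAt_normSq x).rpow_const (Or.inl hNx.ne')
  have hw1 : HasFDerivAt (fun y : EuclideanSpace ℝ (Fin n) => N y ^ (E1-1))
      (((E1-1) * N x ^ (E1 - 1 - 1)) • ((2:ℝ) • innerSL ℝ x)) x :=
    (hasFDerivAt_normSq x).rpow_const (Or.inl hNx.ne')
  have hF : HasFDerivAt (fun y => f (σ y)) ((Φ x).comp (Dσ x)) x :=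
    (hfd x hx).comp x (hσd x hx)
  have hsecond : ∀ i : Fin n,
      fderiv ℝ (fun y => fderiv ℝ g y (e i)) x (e i) =
      (8 * N x ^ E1 * N x ^ ((-1:ℝ)-1-1) * Φ x x
        + 4 * N x ^ E1 * (N x ^ ((-1:ℝ)-1))^2 * M x x
        - 8 * E1 * N x ^ ((-1:ℝ)-1) * N x ^ (E1-1) * Φ x x
        + 4 * E1 * (E1-1) * N x ^ (E1-1-1) * f (σ x)) * (x i)^2
      + (-2 * N x ^ E1 * N x ^ ((-1:ℝ)-1) * Φ x x + 2 * E1 * N x ^ (E1-1) * f (σ x))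
      + (-4 * N x ^ E1 * N x ^ ((-1:ℝ)-1) + 4 * E1 * N x ^ (-1:ℝ) * N x ^ (E1-1))
          * (x i * Φ x (e i))
      + (N x ^ E1 * N x ^ (-1:ℝ) * N x ^ (-1:ℝ)) * (M (e i) (e i))
      + (-2 * N x ^ E1 * N x ^ (-1:ℝ) * N x ^ ((-1:ℝ)-1)) * (x i * M x (e i))
      + (-2 * N x ^ E1 * N x ^ (-1:ℝ) * N x ^ ((-1:ℝ)-1)) * (x i * M (e i) x) := by
    intro i
    have hq : HasFDerivAt (fun y => Φ y (e i))
        ((Φ x).comp (0 : EuclideanSpace ℝ (Fin n) →L[ℝ] EuclideanSpace ℝ (Fin n))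
          + (M.comp (Dσ x)).flip (e i)) x :=
      hΦd.clm_apply (hasFDerivAt_const (e i) x)
    have hs : HasFDerivAt (fun y => Φ y y)
        ((Φ x).comp (ContinuousLinearMap.id ℝ (EuclideanSpace ℝ (Fin n)))
          + (M.comp (Dσ x)).flip x) x :=
      hΦd.clm_apply (hasFDerivAt_id x)
    have hp : HasFDerivAt (fun y : EuclideanSpace ℝ (Fin n) => y i)
        (EuclideanSpace.proj (𝕜 := ℝ) i) x :=
      (EuclideanSpace.proj (𝕜 := ℝ) i).hasFDerivAt
    have hproj : ∀ v : EuclideanSpace ℝ (Fin n), EuclideanSpace.proj (𝕜 := ℝ) i v = v i :=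
      fun _ => rfl
    have hone : (e i) i = 1 := by simp [he, EuclideanSpace.single_apply]
    have hev : (fun y => fderiv ℝ g y (e i)) =ᶠ[𝓝 x] (fun y =>
        (N y)^E1 * ((N y)^(-1:ℝ) * Φ y (e i)) +
        (N y)^E1 * ((-1:ℝ) * (N y)^((-1:ℝ)-1) * (2 * y i) * Φ y y) +
        f (σ y) * (E1 * (N y)^(E1-1) * (2 * y i))) :=
      Filter.eventuallyEq_of_mem (hmem x hx) (fun y hy => hG i y hy)
    have H : HasFDerivAt (fun y =>
        (N y)^E1 * ((N y)^(-1:ℝ) * Φ y (e i)) +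
        (N y)^E1 * ((-1:ℝ) * (N y)^((-1:ℝ)-1) * (2 * y i) * Φ y y) +
        f (σ y) * (E1 * (N y)^(E1-1) * (2 * y i))) _ x :=
      ((hu.mul (hv1.mul hq)).add
        (hu.mul (((hv2.const_mul (-1:ℝ)).mul (hp.const_mul (2:ℝ))).mul hs))).add
        (hF.mul ((hw1.const_mul E1).mul (hp.const_mul (2:ℝ))))
    rw [hev.fderiv_eq, H.fderiv]
    simp only [hDσ, ContinuousLinearMap.add_apply, ContinuousLinearMap.smul_apply,
      ContinuousLinearMap.comp_apply, ContinuousLinearMap.smulRight_apply,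
      ContinuousLinearMap.flip_apply, ContinuousLinearMap.id_apply,
      ContinuousLinearMap.zero_apply, map_zero, map_add, map_smul,
      ContinuousLinearMap.coe_smul', Pi.smul_apply, Pi.mul_apply,
      innerSL_apply_apply, smul_eq_mul, hips, hproj, hone]
    ring
  -- summation identities
  have hdecomp : ∑ i, x i • e i = x := by
    have h := (EuclideanSpace.basisFun (Fin n) ℝ).sum_repr x
    simpa [he] using h
  have S1 : ∑ i, x i ^ 2 = N x := by
    symm
    show ‖x‖^2 = _
    rw [EuclideanSpace.norm_eq, Real.sq_sqrt (by positivity)]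
    simp [sq_abs]
  have S2 : ∑ i, x i * Φ x (e i) = Φ x x := by
    calc ∑ i, x i * Φ x (e i) = ∑ i, Φ x (x i • e i) := by simp [map_smul]
    _ = Φ x (∑ i, x i • e i) := by rw [map_sum]
    _ = Φ x x := by rw [hdecomp]
  have S4 : ∑ i, x i * M x (e i) = M x x := by
    calc ∑ i, x i * M x (e i) = ∑ i, M x (x i • e i) := by simp [map_smul]
    _ = M x (∑ i, x i • e i) := by rw [map_sum]
    _ = M x x := by rw [hdecomp]
  have S5 : ∑ i, x i * M (e i) x = M x x := by
    calc ∑ i, x i * M (e i) x = ∑ i, (M (x i • e i)) x := by simp [map_smul]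
    _ = (∑ i, M (x i • e i)) x := by rw [← ContinuousLinearMap.sum_apply]
    _ = (M (∑ i, x i • e i)) x := by rw [map_sum]
    _ = M x x := by rw [hdecomp]
  have S3 : ∑ i, M (e i) (e i) = 0 := by
    have h0 := hharm (σ x) (hσ0 x hx)
    have hci : ∀ i : Fin n,
        fderiv ℝ (fun y => fderiv ℝ f y (e i)) (σ x) (e i) = M (e i) (e i) := by
      intro i
      have h' : fderiv ℝ (fun y => fderiv ℝ f y (e i)) (σ x) = _ :=
        (hMd.clm_apply (hasFDerivAt_const (e i) (σ x))).fderiv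
      rw [h']
      simp
    calc ∑ i, M (e i) (e i)
        = ∑ i, fderiv ℝ (fun y => fderiv ℝ f y (e i)) (σ x) (e i) :=
          Finset.sum_congr rfl fun i _ => (hci i).symm
    _ = 0 := h0
  -- final computation
  show ∑ i, fderiv ℝ (fun y => fderiv ℝ g y (e i)) x (e i) = 0
  rw [Finset.sum_congr rfl fun i _ => hsecond i]
  simp only [Finset.sum_add_distrib, ← Finset.mul_sum, Finset.sum_const, Finset.card_univ,
    Fintype.card_fin, nsmul_eq_mul, S1, S2, S3, S4, S5, mul_zero]
  have hstep : ∀ a : ℝ, N x ^ a = N x * N x ^ (a - 1) := by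
    intro a
    rw [show N x * N x ^ (a-1) = N x ^ (1:ℝ) * N x ^ (a-1) by rw [Real.rpow_one],
        ← Real.rpow_add hNx]
    norm_num
  rw [hstep E1, hstep (E1 - 1), hstep (-1:ℝ), hstep ((-1:ℝ)-1), hE1]
  ring


end

/-- If `f` is twice continuously differentiable and harmonic
(`Δ f = 0`) on `ℝⁿ \ {0}`, then its Kelvin transform
`Kf(x) = ‖x‖^(2-n) f(x/‖x‖²)` is harmonic on `ℝⁿ \ {0}`. -/
theorem kelvin_transform_harmonic (n : ℕ)
    (lap : (EuclideanSpace ℝ (Fin n) → ℝ) → EuclideanSpace ℝ (Fin n) → ℝ)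
    (hlap : ∀ g x, lap g x =
      ∑ i : Fin n,
        fderiv ℝ (fun y => fderiv ℝ g y (EuclideanSpace.single i (1 : ℝ))) x
          (EuclideanSpace.single i (1 : ℝ)))
    (f : EuclideanSpace ℝ (Fin n) → ℝ)
    (hf : ContDiffOn ℝ 2 f {x | x ≠ 0})
    (hharm : ∀ x : EuclideanSpace ℝ (Fin n), x ≠ 0 → lap f x = 0)
    (K : EuclideanSpace ℝ (Fin n) → ℝ)
    (hK : ∀ x, K x = ‖x‖ ^ ((2 : ℝ) - n) * f ((‖x‖ ^ 2)⁻¹ • x)) :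
    ∀ x : EuclideanSpace ℝ (Fin n), x ≠ 0 → lap K x = 0 := by
  intro x hx
  rw [hlap]
  have hKg : K = fun w => (‖w‖^2) ^ ((2 - (n:ℝ))/2) * f ((‖w‖^2) ^ (-1:ℝ) • w) := by
    funext w
    rw [hK w]
    congr 1
    · rw [show ((‖w‖:ℝ)^(2:ℕ)) = ‖w‖ ^ ((2:ℕ):ℝ) from (Real.rpow_natCast _ 2).symm,
        ← Real.rpow_mul (norm_nonneg w)]
      congr 1
      ring
    · rw [Real.rpow_neg_one]
  rw [hKg]
  have hharm' : ∀ z : EuclideanSpace ℝ (Fin n), z ≠ 0 →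
      ∑ i : Fin n, fderiv ℝ (fun y => fderiv ℝ f y (EuclideanSpace.single i (1:ℝ))) z
        (EuclideanSpace.single i (1:ℝ)) = 0 := by
    intro z hz
    rw [← hlap]
    exact hharm z hz
  exact kelvin_aux n f hf hharm' x hx
end

section
/- Let p_t(x,y) = t^{-nα/2} φ(x/t^{α/2}, y/t^{α/2}) θ(y/t^{α/2}) exp(−(ρ(x)+ρ(y))/(2t)) with φ(λx,y)=φ(x,λy), ρ(λx)=λ^{2/α}ρ(x), θ(λy)=λ^β θ(y) for λ > 0. Let I(x) = x ρ(x)^{-α}. Then the transition density of the involuted process, p^I_t(x,y) := p_t(I(x), I(y)) · Jac(I)(y), satisfies ∫₀^∞ p^I_t(x,y) dt = V(y) (h(y)/h(x)) ∫₀^∞ p_t(x,y) dt, where h(x) = ρ(x)^{1−(β+n)α/2} and V(y) = Jac(I)(y) ρ(y)^{nα−2}, whenever the integrals converge. -/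
open MeasureTheory

lemma lintegral_Ioi_mul_left_aux (c : ℝ) (hc : 0 < c) (g : ℝ → ENNReal) :
    ∫⁻ t in Set.Ioi (0 : ℝ), g (c * t) ∂volume
      = ENNReal.ofReal c⁻¹ * ∫⁻ s in Set.Ioi (0 : ℝ), g s ∂volume := by
  set e : ℝ ≃ᵐ ℝ := (Homeomorph.mulLeft₀ c hc.ne').toMeasurableEquiv with he
  have hecoe : (e : ℝ → ℝ) = fun t => c * t := rfl
  have hpre : (fun t : ℝ => c * t) ⁻¹' Set.Ioi (0 : ℝ) = Set.Ioi (0 : ℝ) := by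
    ext t
    simp only [Set.mem_preimage, Set.mem_Ioi]
    constructor
    · intro h'
      by_contra hle
      push_neg at hle
      nlinarith
    · intro h'; positivity
  have hmap : Measure.map e (volume.restrict (Set.Ioi (0 : ℝ)))
      = ENNReal.ofReal c⁻¹ • (volume.restrict (Set.Ioi (0 : ℝ))) := by
    have h1 : ((volume : Measure ℝ).map e).restrict (Set.Ioi (0 : ℝ))
        = (volume.restrict (Set.Ioi (0 : ℝ))).map e := by
      rw [Measure.restrict_map e.measurable measurableSet_Ioi, hecoe, hpre]
    rw [← h1, hecoe, Real.map_volume_mul_left hc.ne', Measure.restrict_smul,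
      abs_of_pos (inv_pos.mpr hc)]
  calc ∫⁻ t in Set.Ioi (0 : ℝ), g (c * t) ∂volume
      = ∫⁻ t, g (e t) ∂(volume.restrict (Set.Ioi (0 : ℝ))) := rfl
    _ = ∫⁻ s, g s ∂(Measure.map e (volume.restrict (Set.Ioi (0 : ℝ)))) :=
        (MeasureTheory.lintegral_map_equiv g e).symm
    _ = ENNReal.ofReal c⁻¹ * ∫⁻ s in Set.Ioi (0 : ℝ), g s ∂volume := by
        rw [hmap, lintegral_smul_measure, smul_eq_mul]

/-- For a semigroup with densities of the form
`p_t(x,y) = t^(-nα/2) φ(x/t^(α/2), y/t^(α/2)) θ(y/t^(α/2)) exp(-(ρ(x)+ρ(y))/(2t))`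
with the stated homogeneity properties, let `I(x) = ρ(x)^(-α) • x` and let
`p^I_t(x,y) = p_t(I x, I y) · Jac(I)(y)`, where `Jac(I)(y)` is the modulus of the
Jacobian determinant of `I` at `y`. Then
`∫₀^∞ p^I_t(x,y) dt = V(y) (h(y)/h(x)) ∫₀^∞ p_t(x,y) dt`, where
`h(x) = ρ(x)^(1-(β+n)α/2)` and `V(y) = Jac(I)(y) ρ(y)^(nα-2)`, whenever the
integrals converge. -/
theorem inverted_process_potential (n : ℕ) (α β : ℝ) (hα : 0 < α)
    (S : Set (EuclideanSpace ℝ (Fin n)))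
    (hS : ∀ c : ℝ, 0 ≤ c → ∀ x ∈ S, c • x ∈ S)
    (φ : EuclideanSpace ℝ (Fin n) → EuclideanSpace ℝ (Fin n) → ℝ)
    (ρ θ : EuclideanSpace ℝ (Fin n) → ℝ)
    (hφpos : ∀ x y, 0 ≤ φ x y) (hθpos : ∀ x, 0 ≤ θ x)
    (hφhom : ∀ c : ℝ, 0 < c → ∀ x y, φ (c • x) y = φ x (c • y))
    (hρhom : ∀ c : ℝ, 0 < c → ∀ x, ρ (c • x) = c ^ ((2 : ℝ) / α) * ρ x)
    (hθhom : ∀ c : ℝ, 0 < c → ∀ x, θ (c • x) = c ^ β * θ x)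
    (p : ℝ → EuclideanSpace ℝ (Fin n) → EuclideanSpace ℝ (Fin n) → ℝ)
    (hp : ∀ t : ℝ, 0 < t → ∀ x y,
      p t x y = t ^ (-((n : ℝ) * α) / 2) *
        φ ((t ^ (-(α / 2)) : ℝ) • x) ((t ^ (-(α / 2)) : ℝ) • y) *
        θ ((t ^ (-(α / 2)) : ℝ) • y) * Real.exp (-(ρ x + ρ y) / (2 * t)))
    (I : EuclideanSpace ℝ (Fin n) → EuclideanSpace ℝ (Fin n))
    (hI : ∀ x, I x = (ρ x ^ (-α)) • x)
    (J : EuclideanSpace ℝ (Fin n) → ℝ)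
    (hJ : ∀ y, J y = |LinearMap.det (fderiv ℝ I y).toLinearMap|)
    (h : EuclideanSpace ℝ (Fin n) → ℝ)
    (hh : ∀ x, h x = ρ x ^ (1 - (β + n) * α / 2))
    (V : EuclideanSpace ℝ (Fin n) → ℝ)
    (hV : ∀ y, V y = J y * ρ y ^ ((n : ℝ) * α - 2))
    (x y : EuclideanSpace ℝ (Fin n)) (hx : 0 < ρ x) (hy : 0 < ρ y)
    (hconv : ∫⁻ t in Set.Ioi (0 : ℝ), ENNReal.ofReal (p t x y) ∂volume < ⊤) :
    ∫⁻ t in Set.Ioi (0 : ℝ), ENNReal.ofReal (p t (I x) (I y) * J y) ∂volume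
      = ENNReal.ofReal (V y * (h y / h x)) *
          ∫⁻ t in Set.Ioi (0 : ℝ), ENNReal.ofReal (p t x y) ∂volume := by
  have hα' : α ≠ 0 := hα.ne'
  have hcpos : 0 < ρ x * ρ y := mul_pos hx hy
  set K0 : ℝ := ρ x ^ ((n : ℝ) * α / 2 + α * β / 2) * ρ y ^ ((n : ℝ) * α / 2 - α * β / 2)
    with hK0
  have hK0pos : 0 < K0 := by positivity
  have hJnn : 0 ≤ J y := by rw [hJ]; exact abs_nonneg _
  -- ρ of inverted points
  have hρI : ∀ z, 0 < ρ z → ρ (I z) = (ρ z)⁻¹ := by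
    intro z hz
    rw [hI, hρhom _ (Real.rpow_pos_of_pos hz _), ← Real.rpow_mul hz.le]
    have h1 : -α * (2 / α) = (-2 : ℝ) := by field_simp
    have h2 : ρ z ^ (-2 : ℝ) = (ρ z)⁻¹ * (ρ z)⁻¹ := by
      rw [show (-2 : ℝ) = -1 + -1 by norm_num, Real.rpow_add hz, Real.rpow_neg_one]
    rw [h1, h2]
    field_simp
  have hρIx : ρ (I x) = (ρ x)⁻¹ := hρI x hx
  have hρIy : ρ (I y) = (ρ y)⁻¹ := hρI y hy
  -- pointwise identity
  have key : ∀ t : ℝ, 0 < t →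
      p t (I x) (I y) * J y = (J y * K0) * p (ρ x * ρ y * t) x y := by
    intro t ht
    have hct : 0 < ρ x * ρ y * t := mul_pos hcpos ht
    have hab : (t ^ (-(α / 2)) * ρ x ^ (-α)) * (t ^ (-(α / 2)) * ρ y ^ (-α))
        = (ρ x * ρ y * t) ^ (-(α / 2)) * (ρ x * ρ y * t) ^ (-(α / 2)) := by
      simp only [Real.rpow_def_of_pos ht, Real.rpow_def_of_pos hx, Real.rpow_def_of_pos hy,
        Real.rpow_def_of_pos hct, Real.log_mul hcpos.ne' ht.ne', Real.log_mul hx.ne' hy.ne',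
        ← Real.exp_add, Real.exp_eq_exp]
      ring
    have hscal : t ^ (-((n : ℝ) * α) / 2) * (t ^ (-(α / 2)) * ρ y ^ (-α)) ^ β
        = K0 * ((ρ x * ρ y * t) ^ (-((n : ℝ) * α) / 2) *
            ((ρ x * ρ y * t) ^ (-(α / 2))) ^ β) := by
      have hb : 0 < t ^ (-(α / 2)) * ρ y ^ (-α) := by positivity
      have hcc : 0 < (ρ x * ρ y * t) ^ (-(α / 2)) := Real.rpow_pos_of_pos hct _
      rw [hK0]
      simp only [Real.rpow_def_of_pos ht, Real.rpow_def_of_pos hx, Real.rpow_def_of_pos hy,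
        Real.rpow_def_of_pos hct, Real.log_mul hcpos.ne' ht.ne', Real.log_mul hx.ne' hy.ne',
        ← Real.exp_add, ← Real.exp_mul, Real.exp_eq_exp]
      ring
    have hexp : -((ρ x)⁻¹ + (ρ y)⁻¹) / (2 * t) = -(ρ x + ρ y) / (2 * (ρ x * ρ y * t)) := by
      field_simp
      ring
    rw [hp t ht (I x) (I y), hp (ρ x * ρ y * t) hct x y, hρIx, hρIy, hI x, hI y,
      smul_smul, smul_smul,
      hφhom (t ^ (-(α / 2)) * ρ x ^ (-α)) (by positivity) x _, smul_smul,
      hφhom ((ρ x * ρ y * t) ^ (-(α / 2))) (Real.rpow_pos_of_pos hct _) x _, smul_smul,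
      hθhom (t ^ (-(α / 2)) * ρ y ^ (-α)) (by positivity) y,
      hθhom ((ρ x * ρ y * t) ^ (-(α / 2))) (Real.rpow_pos_of_pos hct _) y,
      hab, hexp]
    linear_combination (φ x (((ρ x * ρ y * t) ^ (-(α / 2)) * (ρ x * ρ y * t) ^ (-(α / 2))) • y) *
      θ y * Real.exp (-(ρ x + ρ y) / (2 * (ρ x * ρ y * t))) * J y) * hscal
  -- the constant identity
  have hconst : J y * K0 * (ρ x * ρ y)⁻¹ = V y * (h y / h x) := by
    rw [hV y, hh y, hh x]
    have hsc : K0 * (ρ x * ρ y)⁻¹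
        = ρ y ^ ((n : ℝ) * α - 2) * (ρ y ^ (1 - (β + n) * α / 2) / ρ x ^ (1 - (β + n) * α / 2)) := by
      rw [div_eq_mul_inv, ← Real.rpow_neg hx.le, mul_inv, ← Real.rpow_neg_one (ρ x),
        ← Real.rpow_neg_one (ρ y), hK0]
      simp only [Real.rpow_def_of_pos hx, Real.rpow_def_of_pos hy, ← Real.exp_add,
        Real.exp_eq_exp]
      ring
    linear_combination J y * hsc
  -- assemble
  calc ∫⁻ t in Set.Ioi (0 : ℝ), ENNReal.ofReal (p t (I x) (I y) * J y) ∂volume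
      = ∫⁻ t in Set.Ioi (0 : ℝ),
          ENNReal.ofReal ((J y * K0) * p (ρ x * ρ y * t) x y) ∂volume := by
        refine setLIntegral_congr_fun measurableSet_Ioi (fun t ht => ?_)
        rw [key t ht]
    _ = ENNReal.ofReal (J y * K0) *
          ∫⁻ t in Set.Ioi (0 : ℝ), ENNReal.ofReal (p (ρ x * ρ y * t) x y) ∂volume := by
        simp_rw [ENNReal.ofReal_mul (mul_nonneg hJnn hK0pos.le)]
        exact lintegral_const_mul' _ _ ENNReal.ofReal_ne_top
    _ = ENNReal.ofReal (J y * K0) * (ENNReal.ofReal (ρ x * ρ y)⁻¹ *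
          ∫⁻ s in Set.Ioi (0 : ℝ), ENNReal.ofReal (p s x y) ∂volume) := by
        rw [lintegral_Ioi_mul_left_aux (ρ x * ρ y) hcpos (fun s => ENNReal.ofReal (p s x y))]
    _ = ENNReal.ofReal (V y * (h y / h x)) *
          ∫⁻ t in Set.Ioi (0 : ℝ), ENNReal.ofReal (p t x y) ∂volume := by
        rw [← mul_assoc, ← ENNReal.ofReal_mul (mul_nonneg hJnn hK0pos.le), hconst]
end

section
/- For the transition density p_t(x,y) of n independent scaled powered Bessel processes with indices ν_i > −1, scales σ_i > 0, and power α ≠ 0, with mean index ν̄ = (ν₁+⋯+ν_n)/n: if 2n(ν̄+1) > 2, then the potential ∫₀^∞ p_t(x,y) dt is finite for x ≠ y in the open cone, using the asymptotics I_ν(z) ~ z^ν/(2^ν Γ(1+ν)) as z→0 and I_ν(z) ~ e^z/√(2πz) as z→∞ of the modified Bessel function of the first kind. -/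
open MeasureTheory
open Filter
open scoped Real

private lemma pow_le_factorial_mul_exp (M : ℕ) {s : ℝ} (hs : 0 ≤ s) :
    s ^ M ≤ (M.factorial : ℝ) * Real.exp s := by
  have h : ∑ i ∈ Finset.range (M + 1), s ^ i / i.factorial ≤ Real.exp s :=
    Real.sum_le_exp_of_nonneg hs (M + 1)
  have h2 : s ^ M / (M.factorial : ℝ) ≤ ∑ i ∈ Finset.range (M + 1), s ^ i / i.factorial :=
    Finset.single_le_sum (f := fun i => s ^ i / (i.factorial : ℝ))
      (fun i _ => by positivity) (Finset.self_mem_range_succ M)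
  have hM : (0:ℝ) < M.factorial := by positivity
  have := h2.trans h
  rw [div_le_iff₀ hM] at this
  linarith [this]
private lemma bessel_small (ν' : ℝ) (hν' : -1 < ν') (f : ℝ → ℝ)
    (h0 : Filter.Tendsto (fun z : ℝ => f z / (z ^ ν' / ((2 : ℝ) ^ ν' * Real.Gamma (1 + ν'))))
      (nhdsWithin 0 (Set.Ioi 0)) (nhds 1)) :
    ∃ C > 0, ∃ z₁ > 0, ∀ z : ℝ, 0 < z → z < z₁ → |f z| ≤ C * z ^ ν' := by
  have hΓ : 0 < Real.Gamma (1 + ν') := Real.Gamma_pos_of_pos (by linarith)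
  have h2 : (0:ℝ) < (2:ℝ) ^ ν' := Real.rpow_pos_of_pos two_pos _
  have hev : ∀ᶠ z in nhdsWithin 0 (Set.Ioi 0),
      |f z / (z ^ ν' / ((2:ℝ) ^ ν' * Real.Gamma (1 + ν')))| < 2 := by
    have h := h0.abs
    rw [abs_one] at h
    exact h.eventually_lt_const one_lt_two
  rw [eventually_nhdsWithin_iff] at hev
  rcases Metric.eventually_nhds_iff.mp hev with ⟨ε, hε, hball⟩
  refine ⟨2 / ((2:ℝ) ^ ν' * Real.Gamma (1 + ν')), by positivity, ε, hε, ?_⟩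
  intro z hz hzε
  have hdist : dist z 0 < ε := by simpa [Real.dist_eq, abs_of_pos hz] using hzε
  have hb := hball hdist hz
  have hgz : (0:ℝ) < z ^ ν' / ((2:ℝ) ^ ν' * Real.Gamma (1 + ν')) := by positivity
  have hfz : f z = (f z / (z ^ ν' / ((2:ℝ) ^ ν' * Real.Gamma (1 + ν')))) *
      (z ^ ν' / ((2:ℝ) ^ ν' * Real.Gamma (1 + ν'))) := by
    field_simp
  calc |f z| = |f z / (z ^ ν' / ((2:ℝ) ^ ν' * Real.Gamma (1 + ν')))| *
      (z ^ ν' / ((2:ℝ) ^ ν' * Real.Gamma (1 + ν'))) := by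
        conv_lhs => rw [hfz]
        rw [abs_mul, abs_of_pos hgz]
  _ ≤ 2 * (z ^ ν' / ((2:ℝ) ^ ν' * Real.Gamma (1 + ν'))) :=
        mul_le_mul_of_nonneg_right hb.le hgz.le
  _ = 2 / ((2:ℝ) ^ ν' * Real.Gamma (1 + ν')) * z ^ ν' := by ring

private lemma bessel_global (ν' : ℝ) (hν' : -1 < ν') (f : ℝ → ℝ)
    (hc : ContinuousOn f (Set.Ioi 0))
    (h0 : Filter.Tendsto (fun z : ℝ => f z / (z ^ ν' / ((2 : ℝ) ^ ν' * Real.Gamma (1 + ν'))))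
      (nhdsWithin 0 (Set.Ioi 0)) (nhds 1))
    (hi : Filter.Tendsto (fun z : ℝ => f z / (Real.exp z / Real.sqrt (2 * π * z)))
      Filter.atTop (nhds 1)) :
    ∃ C > 0, ∀ z : ℝ, 0 < z → |f z| ≤ C * (z ^ ν' + Real.exp z) := by
  obtain ⟨Ca, hCa, z₁, hz₁, ha⟩ := bessel_small ν' hν' f h0
  have hev : ∀ᶠ z in atTop, |f z / (Real.exp z / Real.sqrt (2 * π * z))| < 2 := by
    have h := hi.abs
    rw [abs_one] at h
    exact h.eventually_lt_const one_lt_two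
  rcases eventually_atTop.1 hev with ⟨z₂, hz₂⟩
  set b : ℝ := max z₂ 1 with hb_def
  obtain ⟨M, hM⟩ := (isCompact_Icc (a := z₁) (b := b)).exists_bound_of_continuousOn
    (hc.mono (fun z hz => lt_of_lt_of_le hz₁ hz.1))
  refine ⟨Ca + (|M| + 1) + 2, by positivity, ?_⟩
  intro z hz
  have hsum1 : (0:ℝ) < z ^ ν' + Real.exp z := by positivity
  rcases lt_or_ge z z₁ with hlt | hge
  · calc |f z| ≤ Ca * z ^ ν' := ha z hz hlt
    _ ≤ Ca * (z ^ ν' + Real.exp z) := by nlinarith [Real.exp_pos z, hCa]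
    _ ≤ (Ca + (|M| + 1) + 2) * (z ^ ν' + Real.exp z) := by nlinarith [abs_nonneg M, hsum1]
  rcases le_or_gt z b with hle | hgt
  · have hmid := hM z ⟨hge, hle⟩
    rw [Real.norm_eq_abs] at hmid
    have h1 : (1:ℝ) ≤ z ^ ν' + Real.exp z := by
      have : (1:ℝ) ≤ Real.exp z := Real.one_le_exp hz.le
      nlinarith [Real.rpow_pos_of_pos hz ν']
    calc |f z| ≤ M := hmid
    _ ≤ |M| + 1 := by cases abs_cases M <;> linarith
    _ ≤ (|M| + 1) * (z ^ ν' + Real.exp z) := le_mul_of_one_le_right (by positivity) h1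
    _ ≤ (Ca + (|M| + 1) + 2) * (z ^ ν' + Real.exp z) := by nlinarith [hsum1, hCa]
  · have hz2 : z₂ ≤ z := le_trans (le_max_left _ _) hgt.le
    have hz1' : (1:ℝ) ≤ z := le_trans (le_max_right _ _) hgt.le
    have hrat := hz₂ z hz2
    have hsq : (1:ℝ) ≤ Real.sqrt (2 * π * z) := by
      rw [show (1:ℝ) = Real.sqrt 1 from (Real.sqrt_one).symm]
      apply Real.sqrt_le_sqrt
      nlinarith [Real.pi_gt_three]
    have hgpos : (0:ℝ) < Real.exp z / Real.sqrt (2 * π * z) := by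
      apply div_pos (Real.exp_pos z)
      linarith
    have hfz : f z = (f z / (Real.exp z / Real.sqrt (2 * π * z))) *
        (Real.exp z / Real.sqrt (2 * π * z)) := by field_simp
    calc |f z| = |f z / (Real.exp z / Real.sqrt (2 * π * z))| *
          (Real.exp z / Real.sqrt (2 * π * z)) := by
          conv_lhs => rw [hfz]
          rw [abs_mul, abs_of_pos hgpos]
    _ ≤ 2 * (Real.exp z / Real.sqrt (2 * π * z)) := mul_le_mul_of_nonneg_right hrat.le hgpos.le
    _ ≤ 2 * Real.exp z := by
        have := div_le_self (Real.exp_pos z).le hsq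
        linarith
    _ ≤ (Ca + (|M| + 1) + 2) * (z ^ ν' + Real.exp z) := by
        nlinarith [Real.rpow_pos_of_pos hz ν', Real.exp_pos z, hCa, abs_nonneg M]

private lemma final_bound (G : ℝ → ℝ) (T M E q : ℝ) (hT : 0 < T) (hq : 1 < q)
    (hS : ∀ t ∈ Set.Ioc (0:ℝ) T, G t ≤ M) (hL : ∀ t ∈ Set.Ioi T, G t ≤ E * t ^ (-q)) :
    ∫⁻ t in Set.Ioi (0:ℝ), ENNReal.ofReal (G t) ∂volume < ⊤ := by
  have hsub : Set.Ioi (0:ℝ) ⊆ Set.Ioc 0 T ∪ Set.Ioi T := fun t ht => by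
    rcases le_or_gt t T with h | h
    · exact Or.inl ⟨ht, h⟩
    · exact Or.inr h
  calc ∫⁻ t in Set.Ioi (0:ℝ), ENNReal.ofReal (G t)
      ≤ ∫⁻ t in Set.Ioc 0 T ∪ Set.Ioi T, ENNReal.ofReal (G t) := lintegral_mono_set hsub
  _ ≤ (∫⁻ t in Set.Ioc (0:ℝ) T, ENNReal.ofReal (G t)) +
      ∫⁻ t in Set.Ioi T, ENNReal.ofReal (G t) := lintegral_union_le _ _ _
  _ < ⊤ := by
      rw [ENNReal.add_lt_top]
      constructor
      · calc ∫⁻ t in Set.Ioc (0:ℝ) T, ENNReal.ofReal (G t)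
            ≤ ∫⁻ _ in Set.Ioc (0:ℝ) T, ENNReal.ofReal M :=
            setLIntegral_mono measurable_const fun t ht => ENNReal.ofReal_le_ofReal (hS t ht)
        _ = ENNReal.ofReal M * volume (Set.Ioc (0:ℝ) T) := setLIntegral_const _ _
        _ < ⊤ := ENNReal.mul_lt_top ENNReal.ofReal_lt_top
            (by rw [Real.volume_Ioc]; exact ENNReal.ofReal_lt_top)
      · have hint : IntegrableOn (fun t : ℝ => E * t ^ (-q)) (Set.Ioi T) volume :=
          (integrableOn_Ioi_rpow_of_lt (by linarith) hT).const_mul E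
        calc ∫⁻ t in Set.Ioi T, ENNReal.ofReal (G t)
            ≤ ∫⁻ t in Set.Ioi T, ENNReal.ofReal (E * t ^ (-q)) :=
            setLIntegral_mono
              ((measurable_const.mul (measurable_id.pow_const (-q))).ennreal_ofReal)
              (fun t ht => ENNReal.ofReal_le_ofReal (hL t ht))
        _ < ⊤ := hint.setLIntegral_lt_top

/-- For the transition density of `n` independent scaled powered Bessel
processes with indices `ν i > -1`, scales `σ i > 0` and power `α ≠ 0`, if
`2n(ν̄ + 1) > 2` (where `ν̄ = (ν₁ + ⋯ + ν_n)/n`) then the potential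
`∫₀^∞ p_t(x,y) dt` is finite for `x ≠ y` with strictly positive coordinates, using
the asymptotics `I_ν(z) ~ z^ν/(2^ν Γ(1+ν))` as `z → 0+` and
`I_ν(z) ~ e^z/√(2πz)` as `z → ∞` of the modified Bessel function `I_ν` of the first
kind. -/
theorem free_scaled_power_bessel_transient (n : ℕ) (hn : 1 ≤ n)
    (α : ℝ) (hα : α ≠ 0)
    (ν σ : Fin n → ℝ) (hν : ∀ i, -1 < ν i) (hσ : ∀ i, 0 < σ i)
    (Iν : ℝ → ℝ → ℝ)
    (hcont : ∀ i, ContinuousOn (Iν (ν i)) (Set.Ioi 0))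
    (hasym0 : ∀ i, Filter.Tendsto
      (fun z : ℝ => Iν (ν i) z / (z ^ ν i / ((2 : ℝ) ^ ν i * Real.Gamma (1 + ν i))))
      (nhdsWithin 0 (Set.Ioi 0)) (nhds 1))
    (hasymInf : ∀ i, Filter.Tendsto
      (fun z : ℝ => Iν (ν i) z / (Real.exp z / Real.sqrt (2 * π * z)))
      Filter.atTop (nhds 1))
    (x y : Fin n → ℝ) (hx : ∀ i, 0 < x i) (hy : ∀ i, 0 < y i) (hxy : x ≠ y)
    (hrec : 2 * (n : ℝ) * ((∑ i, ν i) / n + 1) > 2) :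
    ∫⁻ t in Set.Ioi (0 : ℝ),
        ENNReal.ofReal (∏ i : Fin n,
          (1 / α) * y i ^ (1 / α - 1) * (x i ^ (1 / α) / (σ i ^ 2 * t)) *
            (y i / x i) ^ ((ν i + 1) / α) *
            Iν (ν i) ((x i * y i) ^ (1 / α) / (σ i ^ 2 * t)) *
            Real.exp (-(x i ^ (2 / α) + y i ^ (2 / α)) / (2 * σ i ^ 2 * t)))
        ∂volume < ⊤ := by
  have hα' : (0:ℝ) < |1/α| := abs_pos.mpr (one_div_ne_zero hα)
  -- constants
  obtain ⟨k, hk_def⟩ : ∃ k : Fin n → ℝ, k = fun i => (x i * y i) ^ (1/α) / σ i ^ 2 := ⟨_, rfl⟩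
  have hk : ∀ i, 0 < k i := by
    intro i; rw [hk_def]; have h1 := hx i; have h2 := hy i; have h3 := hσ i; positivity
  obtain ⟨d, hd_def⟩ : ∃ d : Fin n → ℝ,
      d = fun i => (x i ^ (2/α) + y i ^ (2/α)) / (2 * σ i ^ 2) := ⟨_, rfl⟩
  have hd : ∀ i, 0 < d i := by
    intro i; rw [hd_def]
    have h1 := hx i; have h2 := hy i; have h3 := hσ i; positivity
  obtain ⟨c, hc_def⟩ : ∃ c : Fin n → ℝ, c = fun i => d i - k i := ⟨_, rfl⟩
  have hsq : ∀ i, c i = (x i ^ (1/α) - y i ^ (1/α))^2 / (2 * σ i ^ 2) := by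
    intro i
    have hxi := (hx i).le
    have hyi := (hy i).le
    have h1 : (x i * y i) ^ (1/α) = x i ^ (1/α) * y i ^ (1/α) := Real.mul_rpow hxi hyi
    have e2 : (2:ℝ)/α = (1/α) * ((2:ℕ):ℝ) := by push_cast; ring
    have h2 : x i ^ ((2:ℝ)/α) = (x i ^ (1/α)) ^ (2:ℕ) := by
      rw [e2, Real.rpow_mul hxi, Real.rpow_natCast]
    have h3 : y i ^ ((2:ℝ)/α) = (y i ^ (1/α)) ^ (2:ℕ) := by
      rw [e2, Real.rpow_mul hyi, Real.rpow_natCast]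
    rw [hc_def, hd_def, hk_def]
    simp only
    rw [h1, h2, h3]
    have hσi := (hσ i).ne'
    field_simp
    ring
  have hcnn : ∀ i, 0 ≤ c i := fun i => by
    rw [hsq i]; have h3 := hσ i; positivity
  obtain ⟨j, hj⟩ := Function.ne_iff.mp hxy
  have hcj : 0 < c j := by
    have hne : x j ^ (1/α) - y j ^ (1/α) ≠ 0 := by
      rw [sub_ne_zero]
      intro h
      apply hj
      have h1α : (1/α) * α = 1 := by field_simp
      have h2 := congrArg (fun w : ℝ => w ^ α) h
      rwa [← Real.rpow_mul (hx j).le, ← Real.rpow_mul (hy j).le, h1α, Real.rpow_one,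
        Real.rpow_one] at h2
    rw [hsq j]
    have h2 : 0 < (x j ^ (1/α) - y j ^ (1/α))^2 := by
      rw [← sq_abs]; exact pow_pos (abs_pos.mpr hne) 2
    have h3 := hσ j
    positivity
  -- Bessel bounds
  choose CL hCL z1 hz1 hIs using fun i => bessel_small (ν i) (hν i) (Iν (ν i)) (hasym0 i)
  choose CB hCB hIb using fun i =>
    bessel_global (ν i) (hν i) (Iν (ν i)) (hcont i) (hasym0 i) (hasymInf i)
  -- amplitude
  obtain ⟨A, hA_def⟩ : ∃ A : Fin n → ℝ, A = fun i =>
      |1/α| * y i ^ (1/α - 1) * (x i ^ (1/α) / σ i ^ 2) * (y i / x i) ^ ((ν i + 1)/α) := ⟨_, rfl⟩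
  have hA : ∀ i, 0 < A i := by
    intro i; rw [hA_def]; simp only
    have h1 := hx i; have h2 := hy i; have h3 := hσ i
    exact mul_pos (mul_pos (mul_pos hα' (Real.rpow_pos_of_pos h2 _))
      (div_pos (Real.rpow_pos_of_pos h1 _) (by positivity)))
      (Real.rpow_pos_of_pos (div_pos h2 h1) _)
  -- absolute value of a factor
  have habs : ∀ i, ∀ t : ℝ, 0 < t →
      |(1 / α) * y i ^ (1 / α - 1) * (x i ^ (1 / α) / (σ i ^ 2 * t)) *
          (y i / x i) ^ ((ν i + 1) / α) *
          Iν (ν i) ((x i * y i) ^ (1 / α) / (σ i ^ 2 * t)) *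
          Real.exp (-(x i ^ (2 / α) + y i ^ (2 / α)) / (2 * σ i ^ 2 * t))|
        = A i / t * |Iν (ν i) (k i / t)| * Real.exp (-(d i) / t) := by
    intro i t ht
    have harg : (x i * y i) ^ (1/α) / (σ i ^ 2 * t) = k i / t := by
      rw [hk_def]; simp only; rw [div_div]
    have hexp : -(x i ^ (2/α) + y i ^ (2/α)) / (2 * σ i ^ 2 * t) = -(d i) / t := by
      rw [hd_def]; simp only; rw [neg_div, neg_div, div_div]
    rw [harg, hexp, abs_mul, abs_mul, abs_mul, abs_mul, abs_mul, Real.abs_exp,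
      abs_of_pos (Real.rpow_pos_of_pos (hy i) _),
      abs_of_pos (div_pos (Real.rpow_pos_of_pos (hx i) _) (mul_pos (pow_pos (hσ i) 2) ht)),
      abs_of_pos (Real.rpow_pos_of_pos (div_pos (hy i) (hx i)) _), hA_def]
    simp only
    ring
  -- exponents
  obtain ⟨mm, hmm_def⟩ : ∃ mm : Fin n → ℝ, mm = fun i => max (1 + ν i) 1 := ⟨_, rfl⟩
  have hmm1 : ∀ i, 1 + ν i ≤ mm i := fun i => by rw [hmm_def]; exact le_max_left _ _
  have hmm2 : ∀ i, (1:ℝ) ≤ mm i := fun i => by rw [hmm_def]; exact le_max_right _ _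
  -- threshold
  obtain ⟨T, hT_def⟩ : ∃ T : ℝ, T = 1 + ∑ i, k i / z1 i := ⟨_, rfl⟩
  have hT1 : (1:ℝ) ≤ T := by
    rw [hT_def]
    have h : 0 ≤ ∑ i, k i / z1 i :=
      Finset.sum_nonneg fun i _ => (div_pos (hk i) (hz1 i)).le
    linarith
  have hT0 : (0:ℝ) < T := lt_of_lt_of_le one_pos hT1
  have hTk : ∀ i, k i / z1 i ≤ T := by
    intro i
    rw [hT_def]
    have h := Finset.single_le_sum (f := fun i => k i / z1 i)
      (fun i _ => (div_pos (hk i) (hz1 i)).le) (Finset.mem_univ i)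
    linarith
  obtain ⟨DS, hDS_def⟩ : ∃ DS : Fin n → ℝ,
      DS = fun i => A i * CB i * ((k i ^ ν i + 1) * T ^ (mm i)) := ⟨_, rfl⟩
  have hDS : ∀ i, 0 < DS i := by
    intro i; rw [hDS_def]; simp only
    exact mul_pos (mul_pos (hA i) (hCB i))
      (mul_pos (by have := Real.rpow_pos_of_pos (hk i) (ν i); linarith)
        (Real.rpow_pos_of_pos hT0 _))
  -- small-time per-factor bound
  have hSfac : ∀ t : ℝ, 0 < t → t ≤ T → ∀ i,
      |(1 / α) * y i ^ (1 / α - 1) * (x i ^ (1 / α) / (σ i ^ 2 * t)) *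
          (y i / x i) ^ ((ν i + 1) / α) *
          Iν (ν i) ((x i * y i) ^ (1 / α) / (σ i ^ 2 * t)) *
          Real.exp (-(x i ^ (2 / α) + y i ^ (2 / α)) / (2 * σ i ^ 2 * t))|
        ≤ DS i * (t ^ (-(mm i)) * Real.exp (-(c i) / t)) := by
    intro t ht0 htT i
    rw [habs i t ht0]
    have hkt : 0 < k i / t := div_pos (hk i) ht0
    have hIbb := hIb i (k i / t) hkt
    have hpow : ∀ a : ℝ, 0 ≤ a → a ≤ mm i → t ^ (-a) ≤ T ^ (mm i) * t ^ (-(mm i)) := by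
      intro a ha1 ha2
      have e1 : t ^ (-a) = t ^ (mm i - a) * t ^ (-(mm i)) := by
        rw [← Real.rpow_add ht0]; congr 1; ring
      rw [e1]
      apply mul_le_mul_of_nonneg_right _ (Real.rpow_nonneg ht0.le _)
      exact (Real.rpow_le_rpow ht0.le htT (by linarith)).trans
        (Real.rpow_le_rpow_of_exponent_le hT1 (by linarith))
    have hEdc : Real.exp (-(d i)/t) ≤ Real.exp (-(c i)/t) := by
      apply Real.exp_le_exp.mpr
      have hdc : (0:ℝ) ≤ d i - c i := by rw [hc_def]; simp only; linarith [hk i]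
      have h := div_nonneg hdc ht0.le
      have heq : (d i - c i)/t = -(c i)/t - (-(d i)/t) := by ring
      linarith [heq ▸ h]
    have hedc : Real.exp (k i / t) * Real.exp (-(d i)/t) = Real.exp (-(c i)/t) := by
      rw [← Real.exp_add]; congr 1; rw [hc_def]; simp only; field_simp; ring
    have h1 : t⁻¹ * ((k i / t) ^ ν i) * Real.exp (-(d i)/t)
        ≤ (k i ^ ν i * T ^ mm i) * (t ^ (-(mm i)) * Real.exp (-(c i)/t)) := by
      have hPr : (k i / t) ^ ν i = k i ^ ν i * t ^ (-(ν i)) := by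
        rw [Real.div_rpow (hk i).le ht0.le, Real.rpow_neg ht0.le, div_eq_mul_inv]
      have hcomb : t⁻¹ * t ^ (-(ν i)) = t ^ (-(1 + ν i)) := by
        rw [← Real.rpow_neg_one t, ← Real.rpow_add ht0]; congr 1; ring
      calc t⁻¹ * ((k i / t) ^ ν i) * Real.exp (-(d i)/t)
          = k i ^ ν i * (t⁻¹ * t ^ (-(ν i))) * Real.exp (-(d i)/t) := by rw [hPr]; ring
        _ = k i ^ ν i * t ^ (-(1 + ν i)) * Real.exp (-(d i)/t) := by rw [hcomb]
        _ ≤ k i ^ ν i * (T ^ mm i * t ^ (-(mm i))) * Real.exp (-(c i)/t) := by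
            apply mul_le_mul _ hEdc (Real.exp_nonneg _) _
            · exact mul_le_mul_of_nonneg_left (hpow (1 + ν i) (by linarith [hν i]) (hmm1 i))
                (Real.rpow_nonneg (hk i).le _)
            · exact mul_nonneg (Real.rpow_nonneg (hk i).le _)
                (mul_nonneg (Real.rpow_nonneg hT0.le _) (Real.rpow_nonneg ht0.le _))
        _ = (k i ^ ν i * T ^ mm i) * (t ^ (-(mm i)) * Real.exp (-(c i)/t)) := by ring
    have h2 : t⁻¹ * Real.exp (k i / t) * Real.exp (-(d i)/t)
        ≤ (T ^ mm i) * (t ^ (-(mm i)) * Real.exp (-(c i)/t)) := by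
      calc t⁻¹ * Real.exp (k i / t) * Real.exp (-(d i)/t)
          = t ^ (-(1:ℝ)) * Real.exp (-(c i)/t) := by
            rw [mul_assoc, hedc, ← Real.rpow_neg_one t]
        _ ≤ (T ^ mm i * t ^ (-(mm i))) * Real.exp (-(c i)/t) :=
            mul_le_mul_of_nonneg_right (hpow 1 zero_le_one (hmm2 i)) (Real.exp_nonneg _)
        _ = (T ^ mm i) * (t ^ (-(mm i)) * Real.exp (-(c i)/t)) := by ring
    calc A i / t * |Iν (ν i) (k i / t)| * Real.exp (-(d i)/t)
        ≤ A i / t * (CB i * ((k i / t) ^ ν i + Real.exp (k i / t))) * Real.exp (-(d i)/t) :=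
          mul_le_mul_of_nonneg_right
            (mul_le_mul_of_nonneg_left hIbb (div_nonneg (hA i).le ht0.le))
            (Real.exp_nonneg _)
      _ = A i * CB i * (t⁻¹ * ((k i / t) ^ ν i) * Real.exp (-(d i)/t)
            + t⁻¹ * Real.exp (k i / t) * Real.exp (-(d i)/t)) := by ring
      _ ≤ A i * CB i * ((k i ^ ν i * T ^ mm i) * (t ^ (-(mm i)) * Real.exp (-(c i)/t))
            + (T ^ mm i) * (t ^ (-(mm i)) * Real.exp (-(c i)/t))) :=
          mul_le_mul_of_nonneg_left (add_le_add h1 h2) (mul_pos (hA i) (hCB i)).le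
      _ = DS i * (t ^ (-(mm i)) * Real.exp (-(c i)/t)) := by
          rw [hDS_def]; simp only; ring
  -- uniform bound for the small-time envelope
  have hcsum : 0 < ∑ i, c i :=
    Finset.sum_pos' (fun i _ => hcnn i) ⟨j, Finset.mem_univ j, hcj⟩
  obtain ⟨MN, hMN⟩ : ∃ M : ℕ, (∑ i, mm i) ≤ (M:ℝ) := ⟨Nat.ceil _, Nat.le_ceil _⟩
  have hsup : ∀ t : ℝ, 0 < t → t ≤ T →
      t ^ (-(∑ i, mm i)) * Real.exp (-(∑ i, c i)/t)
        ≤ (MN.factorial : ℝ) / (∑ i, c i)^MN * T ^ ((MN:ℝ) - ∑ i, mm i) := by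
    intro t ht0 htT
    have hs : 0 < (∑ i, c i)/t := div_pos hcsum ht0
    have hXpos : 0 < Real.exp ((∑ i, c i)/t) := Real.exp_pos _
    have htM : 0 < t ^ MN := pow_pos ht0 _
    have hcM : 0 < (∑ i, c i)^MN := pow_pos hcsum _
    have key : (∑ i, c i)^MN ≤ (MN.factorial:ℝ) * t^MN * Real.exp ((∑ i, c i)/t) := by
      have h1 := pow_le_factorial_mul_exp MN hs.le
      rw [div_pow, div_le_iff₀ htM] at h1
      exact h1.trans_eq (by ring)
    have hE : Real.exp (-(∑ i, c i)/t) ≤ (MN.factorial : ℝ) * t^MN / (∑ i, c i)^MN := by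
      rw [neg_div, Real.exp_neg, le_div_iff₀ hcM]
      calc (Real.exp ((∑ i, c i)/t))⁻¹ * (∑ i, c i)^MN
          ≤ (Real.exp ((∑ i, c i)/t))⁻¹ *
            ((MN.factorial:ℝ) * t^MN * Real.exp ((∑ i, c i)/t)) :=
            mul_le_mul_of_nonneg_left key (inv_nonneg.mpr hXpos.le)
        _ = (MN.factorial:ℝ) * t^MN := by field_simp
    calc t ^ (-(∑ i, mm i)) * Real.exp (-(∑ i, c i)/t)
        ≤ t ^ (-(∑ i, mm i)) * ((MN.factorial:ℝ) * t^MN / (∑ i, c i)^MN) :=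
          mul_le_mul_of_nonneg_left hE (Real.rpow_nonneg ht0.le _)
      _ = (MN.factorial:ℝ) / (∑ i, c i)^MN * t ^ ((MN:ℝ) - ∑ i, mm i) := by
          rw [← Real.rpow_natCast t MN,
            show (MN:ℝ) - ∑ i, mm i = -(∑ i, mm i) + (MN:ℝ) from by ring,
            Real.rpow_add ht0]
          ring
      _ ≤ (MN.factorial:ℝ) / (∑ i, c i)^MN * T ^ ((MN:ℝ) - ∑ i, mm i) :=
          mul_le_mul_of_nonneg_left
            (Real.rpow_le_rpow ht0.le htT (by linarith))
            (div_nonneg (by positivity) (pow_nonneg hcsum.le _))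
  -- large-time per-factor bound
  have hLfac : ∀ t : ℝ, T < t → ∀ i,
      |(1 / α) * y i ^ (1 / α - 1) * (x i ^ (1 / α) / (σ i ^ 2 * t)) *
          (y i / x i) ^ ((ν i + 1) / α) *
          Iν (ν i) ((x i * y i) ^ (1 / α) / (σ i ^ 2 * t)) *
          Real.exp (-(x i ^ (2 / α) + y i ^ (2 / α)) / (2 * σ i ^ 2 * t))|
        ≤ (A i * CL i * k i ^ ν i) * t ^ (-(1 + ν i)) := by
    intro t htT i
    have ht0 : 0 < t := lt_trans hT0 htT
    rw [habs i t ht0]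
    have hklt : k i / t < z1 i := by
      rw [div_lt_iff₀ ht0]
      have h := hTk i
      rw [div_le_iff₀ (hz1 i)] at h
      nlinarith [hz1 i]
    have hIsb := hIs i (k i / t) (div_pos (hk i) ht0) hklt
    have hcomb : t⁻¹ * t ^ (-(ν i)) = t ^ (-(1 + ν i)) := by
      rw [← Real.rpow_neg_one t, ← Real.rpow_add ht0]; congr 1; ring
    calc A i / t * |Iν (ν i) (k i / t)| * Real.exp (-(d i)/t)
        ≤ (A i / t * (CL i * (k i / t) ^ ν i)) * 1 := by
          apply mul_le_mul _ _ (Real.exp_nonneg _) _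
          · exact mul_le_mul_of_nonneg_left hIsb (div_nonneg (hA i).le ht0.le)
          · exact Real.exp_le_one_iff.mpr (by
              have := div_nonneg (hd i).le ht0.le
              have heq : -(d i)/t = -(d i / t) := by ring
              rw [heq]; linarith)
          · exact mul_nonneg (div_nonneg (hA i).le ht0.le)
              (mul_nonneg (hCL i).le (Real.rpow_nonneg (div_pos (hk i) ht0).le _))
      _ = A i * CL i * k i ^ ν i * (t⁻¹ * t ^ (-(ν i))) := by
          rw [Real.div_rpow (hk i).le ht0.le, Real.rpow_neg ht0.le]; ring
      _ = (A i * CL i * k i ^ ν i) * t ^ (-(1 + ν i)) := by rw [hcomb]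
  -- product bounds
  have hSmall : ∀ t ∈ Set.Ioc (0:ℝ) T,
      (∏ i : Fin n,
          (1 / α) * y i ^ (1 / α - 1) * (x i ^ (1 / α) / (σ i ^ 2 * t)) *
            (y i / x i) ^ ((ν i + 1) / α) *
            Iν (ν i) ((x i * y i) ^ (1 / α) / (σ i ^ 2 * t)) *
            Real.exp (-(x i ^ (2 / α) + y i ^ (2 / α)) / (2 * σ i ^ 2 * t)))
        ≤ (∏ i, DS i) * ((MN.factorial:ℝ)/(∑ i, c i)^MN * T^((MN:ℝ) - ∑ i, mm i)) := by
    intro t ht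
    obtain ⟨ht0, htT⟩ := ht
    have hprodneg : ∑ i : Fin n, -mm i = -(∑ i, mm i) := by
      rw [← Finset.sum_neg_distrib]
    calc (∏ i : Fin n,
          (1 / α) * y i ^ (1 / α - 1) * (x i ^ (1 / α) / (σ i ^ 2 * t)) *
            (y i / x i) ^ ((ν i + 1) / α) *
            Iν (ν i) ((x i * y i) ^ (1 / α) / (σ i ^ 2 * t)) *
            Real.exp (-(x i ^ (2 / α) + y i ^ (2 / α)) / (2 * σ i ^ 2 * t)))
        ≤ |∏ i : Fin n,
          (1 / α) * y i ^ (1 / α - 1) * (x i ^ (1 / α) / (σ i ^ 2 * t)) *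
            (y i / x i) ^ ((ν i + 1) / α) *
            Iν (ν i) ((x i * y i) ^ (1 / α) / (σ i ^ 2 * t)) *
            Real.exp (-(x i ^ (2 / α) + y i ^ (2 / α)) / (2 * σ i ^ 2 * t))| := le_abs_self _
      _ = ∏ i : Fin n, |(1 / α) * y i ^ (1 / α - 1) * (x i ^ (1 / α) / (σ i ^ 2 * t)) *
            (y i / x i) ^ ((ν i + 1) / α) *
            Iν (ν i) ((x i * y i) ^ (1 / α) / (σ i ^ 2 * t)) *
            Real.exp (-(x i ^ (2 / α) + y i ^ (2 / α)) / (2 * σ i ^ 2 * t))| :=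
          Finset.abs_prod _ _
      _ ≤ ∏ i, (DS i * (t ^ (-(mm i)) * Real.exp (-(c i) / t))) :=
          Finset.prod_le_prod (fun i _ => abs_nonneg _) (fun i _ => hSfac t ht0 htT i)
      _ = (∏ i, DS i) * (t ^ (-(∑ i, mm i)) * Real.exp (-(∑ i, c i)/t)) := by
          rw [Finset.prod_mul_distrib, Finset.prod_mul_distrib,
            ← Real.rpow_sum_of_pos ht0 (fun i => -(mm i)) Finset.univ, hprodneg,
            ← Real.exp_sum]
          congr 2
          rw [← Finset.sum_div, ← Finset.sum_neg_distrib]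
      _ ≤ (∏ i, DS i) * ((MN.factorial:ℝ)/(∑ i, c i)^MN * T^((MN:ℝ) - ∑ i, mm i)) :=
          mul_le_mul_of_nonneg_left (hsup t ht0 htT)
            (Finset.prod_nonneg fun i _ => (hDS i).le)
  have hLarge : ∀ t ∈ Set.Ioi T,
      (∏ i : Fin n,
          (1 / α) * y i ^ (1 / α - 1) * (x i ^ (1 / α) / (σ i ^ 2 * t)) *
            (y i / x i) ^ ((ν i + 1) / α) *
            Iν (ν i) ((x i * y i) ^ (1 / α) / (σ i ^ 2 * t)) *
            Real.exp (-(x i ^ (2 / α) + y i ^ (2 / α)) / (2 * σ i ^ 2 * t)))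
        ≤ (∏ i, (A i * CL i * k i ^ ν i)) * t ^ (-(∑ i, (1 + ν i))) := by
    intro t ht
    have ht0 : 0 < t := lt_trans hT0 ht
    calc (∏ i : Fin n,
          (1 / α) * y i ^ (1 / α - 1) * (x i ^ (1 / α) / (σ i ^ 2 * t)) *
            (y i / x i) ^ ((ν i + 1) / α) *
            Iν (ν i) ((x i * y i) ^ (1 / α) / (σ i ^ 2 * t)) *
            Real.exp (-(x i ^ (2 / α) + y i ^ (2 / α)) / (2 * σ i ^ 2 * t)))
        ≤ |∏ i : Fin n,
          (1 / α) * y i ^ (1 / α - 1) * (x i ^ (1 / α) / (σ i ^ 2 * t)) *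
            (y i / x i) ^ ((ν i + 1) / α) *
            Iν (ν i) ((x i * y i) ^ (1 / α) / (σ i ^ 2 * t)) *
            Real.exp (-(x i ^ (2 / α) + y i ^ (2 / α)) / (2 * σ i ^ 2 * t))| := le_abs_self _
      _ = ∏ i : Fin n, |(1 / α) * y i ^ (1 / α - 1) * (x i ^ (1 / α) / (σ i ^ 2 * t)) *
            (y i / x i) ^ ((ν i + 1) / α) *
            Iν (ν i) ((x i * y i) ^ (1 / α) / (σ i ^ 2 * t)) *
            Real.exp (-(x i ^ (2 / α) + y i ^ (2 / α)) / (2 * σ i ^ 2 * t))| :=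
          Finset.abs_prod _ _
      _ ≤ ∏ i, ((A i * CL i * k i ^ ν i) * t ^ (-(1 + ν i))) :=
          Finset.prod_le_prod (fun i _ => abs_nonneg _) (fun i _ => hLfac t ht i)
      _ = (∏ i, (A i * CL i * k i ^ ν i)) * t ^ (-(∑ i, (1 + ν i))) := by
          rw [Finset.prod_mul_distrib,
            ← Real.rpow_sum_of_pos ht0 (fun i => -(1 + ν i)) Finset.univ,
            ← Finset.sum_neg_distrib]
  -- exponent
  have hn0 : (0:ℝ) < n := by exact_mod_cast hn
  have hp : 1 < ∑ i, (1 + ν i) := by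
    have hsum : ∑ i : Fin n, (1 + ν i) = n + ∑ i, ν i := by
      rw [Finset.sum_add_distrib, Finset.sum_const, Finset.card_univ, Fintype.card_fin,
        nsmul_eq_mul, mul_one]
    have hne : (n:ℝ) ≠ 0 := ne_of_gt hn0
    have hmd : (n:ℝ) * ((∑ i, ν i) / n) = ∑ i, ν i := by field_simp
    rw [hsum]
    nlinarith [hrec]
  exact final_bound _ T
    ((∏ i, DS i) * ((MN.factorial:ℝ)/(∑ i, c i)^MN * T^((MN:ℝ) - ∑ i, mm i)))
    (∏ i, (A i * CL i * k i ^ ν i)) (∑ i, (1 + ν i)) hT0 hp hSmall hLarge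
end
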